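/- Let n, s, t, r₁, r₂ be positive integers with r = r₁ + r₂, δ ≤ t ≤ s, n ≥ 2s+1, and r₁ ≠ r₂. The number of copies of K_{r₁,r₂} in the graph G(n,s,t) equals Σ_{j=1,2} C(t, r_j)·(C(n−r_j−1, r−r_j) − C(2s−t−r_j, r−r_j)) + Σ_{j=1,2} C(δ, r_j)·C(n−r_j−1, r−r_j−1) + C(2s−t, r)·C(r, r₁). -/

import Mathlib

open Finset

section
variable {α : Type*} [Fintype α] [DecidableEq α]

-- paste helpers (assume compiled; re-included for the test)
variable {α : Type*} [Fintype α] [DecidableEq α]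

/-- Fiberwise counting over the first component. -/
lemma card_pairs_fst (P : Finset α → Prop) (Q : Finset α → Finset α → Prop)
    [DecidablePred P] [∀ S, DecidablePred (Q S)] :
    (univ.filter fun p : Finset α × Finset α => P p.1 ∧ Q p.1 p.2).card
      = ∑ S ∈ univ.filter P, (univ.filter fun T => Q S T).card := by
  rw [Finset.card_eq_sum_card_fiberwise (f := Prod.fst) (t := univ.filter P)
    (fun p hp => by simp only [Finset.mem_coe, mem_filter, mem_univ, true_and] at hp ⊢; exact hp.1)]
  refine Finset.sum_congr rfl fun S hS => ?_
  have key : ((univ.filter fun p : Finset α × Finset α => P p.1 ∧ Q p.1 p.2).filter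
        fun p => p.1 = S)
      = (univ.filter fun T => Q S T).map
        ⟨fun T => (S, T), fun a b h => by simpa using h⟩ := by
    ext ⟨a, b⟩
    simp only [mem_filter, mem_univ, true_and, Finset.mem_map, Function.Embedding.coeFn_mk,
      Prod.mk.injEq]
    constructor
    · rintro ⟨⟨hP, hQ⟩, rfl⟩; exact ⟨b, by simpa using hQ, rfl⟩
    · rintro ⟨T, hT, h⟩
      obtain ⟨rfl, rfl⟩ := Prod.mk.inj h
      simp only [mem_filter, mem_univ, true_and] at hS
      exact ⟨⟨hS, hT⟩, rfl⟩
  rw [key, Finset.card_map]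

/-- Fiberwise counting over the second component. -/
lemma card_pairs_snd (P : Finset α → Prop) (Q : Finset α → Finset α → Prop)
    [DecidablePred P] [∀ S, DecidablePred (Q S)] :
    (univ.filter fun p : Finset α × Finset α => P p.2 ∧ Q p.2 p.1).card
      = ∑ T ∈ univ.filter P, (univ.filter fun S => Q T S).card := by
  rw [← card_pairs_fst P Q]
  have : (univ.filter fun p : Finset α × Finset α => P p.2 ∧ Q p.2 p.1)
      = (univ.filter fun p : Finset α × Finset α => P p.1 ∧ Q p.1 p.2).map
        (Equiv.prodComm _ _).toEmbedding := by
    ext ⟨a, b⟩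
    simp [Equiv.prodComm, Prod.ext_iff, and_comm]
  rw [this, Finset.card_map]

lemma card_subsets (W : Finset α) (k : ℕ) :
    (univ.filter fun S : Finset α => S.card = k ∧ S ⊆ W).card = W.card.choose k := by
  rw [← Finset.card_powersetCard]
  congr 1
  ext S
  simp [Finset.mem_powersetCard, and_comm]

lemma card_subsets_not (U W : Finset α) (hWU : W ⊆ U) (k : ℕ) :
    (univ.filter fun S : Finset α => S.card = k ∧ S ⊆ U ∧ ¬ S ⊆ W).card
      = U.card.choose k - W.card.choose k := by
  have h1 : (univ.filter fun S : Finset α => S.card = k ∧ S ⊆ U ∧ ¬ S ⊆ W)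
      = (U.powersetCard k) \ (W.powersetCard k) := by
    ext S
    simp [Finset.mem_powersetCard]
    tauto
  rw [h1, Finset.card_sdiff_of_subset (Finset.powersetCard_mono hWU), Finset.card_powersetCard,
    Finset.card_powersetCard]

lemma card_subsets_mem (X : Finset α) (x : α) (hx : x ∉ X) (k : ℕ) :
    (univ.filter fun S : Finset α => S.card = k + 1 ∧ x ∈ S ∧ S ⊆ insert x X).card
      = X.card.choose k := by
  rw [← Finset.card_powersetCard]
  refine Finset.card_bij' (fun S _ => S.erase x) (fun T _ => insert x T) ?hi ?hj ?li ?ri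
  case hi =>
    intro S hS
    simp only [mem_filter, mem_univ, true_and] at hS
    obtain ⟨hc, hxS, hSX⟩ := hS
    rw [Finset.mem_powersetCard]
    constructor
    · intro y hy
      have := hSX (Finset.mem_of_mem_erase hy)
      rcases Finset.mem_insert.1 this with h | h
      · exact absurd h (Finset.ne_of_mem_erase hy)
      · exact h
    · rw [Finset.card_erase_of_mem hxS, hc]; rfl
  case hj =>
    intro T hT
    rw [Finset.mem_powersetCard] at hT
    have hxT : x ∉ T := fun h => hx (hT.1 h)
    simp only [mem_filter, mem_univ, true_and]
    exact ⟨by rw [Finset.card_insert_of_notMem hxT, hT.2], Finset.mem_insert_self _ _,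
      Finset.insert_subset_insert _ hT.1⟩
  case li =>
    intro S hS
    simp only [mem_filter, mem_univ, true_and] at hS
    exact Finset.insert_erase hS.2.1
  case ri =>
    intro T hT
    rw [Finset.mem_powersetCard] at hT
    exact Finset.erase_insert (fun h => hx (hT.1 h))

lemma card_fin_lt (n m : ℕ) (h : m ≤ n) :
    (univ.filter fun v : Fin n => (v : ℕ) < m).card = m := by
  have key : (univ.filter fun v : Fin n => (v : ℕ) < m) = Finset.map (Fin.castLEEmb h) univ := by
    ext v
    simp only [mem_filter, mem_univ, true_and, Finset.mem_map, Fin.castLEEmb]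
    constructor
    · intro hv; exact ⟨⟨v, hv⟩, rfl⟩
    · rintro ⟨a, -, rfl⟩; exact a.2
  rw [key, Finset.card_map, Finset.card_univ, Fintype.card_fin]

lemma choose_mul_choose (N a b : ℕ) :
    N.choose a * (N - a).choose b = N.choose (a + b) * (a + b).choose a := by
  rcases le_or_gt (a + b) N with h | h
  · rw [Nat.choose_mul (n := N) (Nat.le_add_right a b), Nat.add_sub_cancel_left]
  · rcases le_or_gt a N with ha | ha
    · have h2 : N - a < b := by omega
      rw [Nat.choose_eq_zero_of_lt h2, Nat.choose_eq_zero_of_lt h, Nat.mul_zero, Nat.zero_mul]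
    · rw [Nat.choose_eq_zero_of_lt ha, Nat.choose_eq_zero_of_lt h, Nat.zero_mul, Nat.zero_mul]

lemma count1_snd (W : Finset α) (x : α) (hxW : x ∉ W) (k b : ℕ) :
    (univ.filter fun p : Finset α × Finset α =>
        (p.2.card = b ∧ p.2 ⊆ W) ∧
        (p.1.card = k + 1 ∧ x ∈ p.1 ∧ p.1 ⊆ insert x (univ \ insert x p.2))).card
      = W.card.choose b * (Fintype.card α - b - 1).choose k := by
  rw [card_pairs_snd (fun T => T.card = b ∧ T ⊆ W)
    (fun T S => S.card = k + 1 ∧ x ∈ S ∧ S ⊆ insert x (univ \ insert x T))]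
  have hconst : ∀ T ∈ univ.filter fun T : Finset α => T.card = b ∧ T ⊆ W,
      (univ.filter fun S => S.card = k + 1 ∧ x ∈ S ∧ S ⊆ insert x (univ \ insert x T)).card
        = (Fintype.card α - b - 1).choose k := by
    intro T hT
    simp only [mem_filter, mem_univ, true_and] at hT
    have hxT : x ∉ T := fun h => hxW (hT.2 h)
    rw [card_subsets_mem (univ \ insert x T) x (by simp) k]
    congr 1
    rw [Finset.card_sdiff_of_subset (Finset.subset_univ _), Finset.card_insert_of_notMem hxT,
      Finset.card_univ, hT.1]
    omega
  rw [Finset.sum_congr rfl hconst, Finset.sum_const, smul_eq_mul, card_subsets]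

lemma count1_fst (W : Finset α) (x : α) (hxW : x ∉ W) (k a : ℕ) :
    (univ.filter fun p : Finset α × Finset α =>
        (p.1.card = a ∧ p.1 ⊆ W) ∧
        (p.2.card = k + 1 ∧ x ∈ p.2 ∧ p.2 ⊆ insert x (univ \ insert x p.1))).card
      = W.card.choose a * (Fintype.card α - a - 1).choose k := by
  rw [card_pairs_fst (fun S => S.card = a ∧ S ⊆ W)
    (fun S T => T.card = k + 1 ∧ x ∈ T ∧ T ⊆ insert x (univ \ insert x S))]
  have hconst : ∀ S ∈ univ.filter fun S : Finset α => S.card = a ∧ S ⊆ W,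
      (univ.filter fun T => T.card = k + 1 ∧ x ∈ T ∧ T ⊆ insert x (univ \ insert x S)).card
        = (Fintype.card α - a - 1).choose k := by
    intro S hS
    simp only [mem_filter, mem_univ, true_and] at hS
    have hxS : x ∉ S := fun h => hxW (hS.2 h)
    rw [card_subsets_mem (univ \ insert x S) x (by simp) k]
    congr 1
    rw [Finset.card_sdiff_of_subset (Finset.subset_univ _), Finset.card_insert_of_notMem hxS,
      Finset.card_univ, hS.1]
    omega
  rw [Finset.sum_congr rfl hconst, Finset.sum_const, smul_eq_mul, card_subsets]

lemma count2_snd (Wsmall Wbig : Finset α) (x : α) (hx : x ∉ Wbig) (hW : Wsmall ⊆ Wbig)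
    (a b : ℕ) :
    (univ.filter fun p : Finset α × Finset α =>
        (p.2.card = b ∧ p.2 ⊆ Wsmall) ∧
        (p.1.card = a ∧ p.1 ⊆ univ \ insert x p.2 ∧ ¬ p.1 ⊆ Wbig \ p.2)).card
      = Wsmall.card.choose b *
          ((Fintype.card α - b - 1).choose a - (Wbig.card - b).choose a) := by
  rw [card_pairs_snd (fun T => T.card = b ∧ T ⊆ Wsmall)
    (fun T S => S.card = a ∧ S ⊆ univ \ insert x T ∧ ¬ S ⊆ Wbig \ T)]
  have hconst : ∀ T ∈ univ.filter fun T : Finset α => T.card = b ∧ T ⊆ Wsmall,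
      (univ.filter fun S => S.card = a ∧ S ⊆ univ \ insert x T ∧ ¬ S ⊆ Wbig \ T).card
        = (Fintype.card α - b - 1).choose a - (Wbig.card - b).choose a := by
    intro T hT
    simp only [mem_filter, mem_univ, true_and] at hT
    have hTb : T ⊆ Wbig := hT.2.trans hW
    have hxT : x ∉ T := fun h => hx (hTb h)
    have hsub : Wbig \ T ⊆ univ \ insert x T := by
      intro v hv
      simp only [Finset.mem_sdiff, Finset.mem_univ, Finset.mem_insert, true_and] at hv ⊢
      rcases hv with ⟨hv1, hv2⟩
      exact fun h => h.elim (fun h' => hx (h' ▸ hv1)) hv2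
    rw [card_subsets_not _ _ hsub a]
    congr 2
    · rw [Finset.card_sdiff_of_subset (Finset.subset_univ _), Finset.card_insert_of_notMem hxT,
        Finset.card_univ, hT.1]
      omega
    · rw [Finset.card_sdiff_of_subset hTb, hT.1]
  rw [Finset.sum_congr rfl hconst, Finset.sum_const, smul_eq_mul, card_subsets]

lemma count2_fst (Wsmall Wbig : Finset α) (x : α) (hx : x ∉ Wbig) (hW : Wsmall ⊆ Wbig)
    (a b : ℕ) :
    (univ.filter fun p : Finset α × Finset α =>
        (p.1.card = a ∧ p.1 ⊆ Wsmall) ∧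
        (p.2.card = b ∧ p.2 ⊆ univ \ insert x p.1 ∧ ¬ p.2 ⊆ Wbig \ p.1)).card
      = Wsmall.card.choose a *
          ((Fintype.card α - a - 1).choose b - (Wbig.card - a).choose b) := by
  rw [card_pairs_fst (fun S => S.card = a ∧ S ⊆ Wsmall)
    (fun S T => T.card = b ∧ T ⊆ univ \ insert x S ∧ ¬ T ⊆ Wbig \ S)]
  have hconst : ∀ S ∈ univ.filter fun S : Finset α => S.card = a ∧ S ⊆ Wsmall,
      (univ.filter fun T => T.card = b ∧ T ⊆ univ \ insert x S ∧ ¬ T ⊆ Wbig \ S).card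
        = (Fintype.card α - a - 1).choose b - (Wbig.card - a).choose b := by
    intro S hS
    simp only [mem_filter, mem_univ, true_and] at hS
    have hSb : S ⊆ Wbig := hS.2.trans hW
    have hxS : x ∉ S := fun h => hx (hSb h)
    have hsub : Wbig \ S ⊆ univ \ insert x S := by
      intro v hv
      simp only [Finset.mem_sdiff, Finset.mem_univ, Finset.mem_insert, true_and] at hv ⊢
      rcases hv with ⟨hv1, hv2⟩
      exact fun h => h.elim (fun h' => hx (h' ▸ hv1)) hv2
    rw [card_subsets_not _ _ hsub b]
    congr 2
    · rw [Finset.card_sdiff_of_subset (Finset.subset_univ _), Finset.card_insert_of_notMem hxS,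
        Finset.card_univ, hS.1]
      omega
    · rw [Finset.card_sdiff_of_subset hSb, hS.1]
  rw [Finset.sum_congr rfl hconst, Finset.sum_const, smul_eq_mul, card_subsets]

lemma count3 (Wbig : Finset α) (a b : ℕ) :
    (univ.filter fun p : Finset α × Finset α =>
        (p.1.card = a ∧ p.1 ⊆ Wbig) ∧ (p.2.card = b ∧ p.2 ⊆ Wbig \ p.1)).card
      = Wbig.card.choose a * (Wbig.card - a).choose b := by
  rw [card_pairs_fst (fun S => S.card = a ∧ S ⊆ Wbig)
    (fun S T => T.card = b ∧ T ⊆ Wbig \ S)]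
  have hconst : ∀ S ∈ univ.filter fun S : Finset α => S.card = a ∧ S ⊆ Wbig,
      (univ.filter fun T => T.card = b ∧ T ⊆ Wbig \ S).card
        = (Wbig.card - a).choose b := by
    intro S hS
    simp only [mem_filter, mem_univ, true_and] at hS
    rw [card_subsets]
    congr 1
    rw [Finset.card_sdiff_of_subset hS.2, hS.1]
  rw [Finset.sum_congr rfl hconst, Finset.sum_const, smul_eq_mul, card_subsets]

end


/-- The extremal graph `G(n,s,t)` on `Fin n`: obtained from
`K_t ∨ (K_{2s−2t} + complement of K_{n+t−2s})` by deleting `t − δ` edges incident to the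
common vertex `u = n−1` of the independent part. -/
def GExt (n s t δ : ℕ) : SimpleGraph (Fin n) where
  Adj i j := i ≠ j ∧
    (((i : ℕ) < 2 * s - t ∧ (j : ℕ) < 2 * s - t) ∨ ((i : ℕ) < t ∨ (j : ℕ) < t)) ∧
    ¬((i : ℕ) = n - 1 ∧ δ ≤ (j : ℕ)) ∧ ¬((j : ℕ) = n - 1 ∧ δ ≤ (i : ℕ))
  symm := by
    constructor
    intro a b h
    obtain ⟨h1, h2, h3, h4⟩ := h
    exact ⟨h1.symm, by tauto, h4, h3⟩
  loopless := by
    constructor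
    intro a h
    exact h.1 rfl

/-- The copies of the complete bipartite graph `K_{r₁,r₂}` in `G`: pairs of disjoint
vertex sets of sizes `r₁` and `r₂` with all cross edges present.  When `r₁ ≠ r₂` each
(unordered) copy corresponds to exactly one such pair. -/
def bipCopies {V : Type*} (G : SimpleGraph V) (r₁ r₂ : ℕ) : Set (Finset V × Finset V) :=
  {p | p.1.card = r₁ ∧ p.2.card = r₂ ∧ Disjoint p.1 p.2 ∧
    ∀ a ∈ p.1, ∀ b ∈ p.2, G.Adj a b}

instance GExt.adjDecidable (n s t δ : ℕ) : DecidableRel (GExt n s t δ).Adj :=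
  fun a b => decidable_of_iff
    (a ≠ b ∧
      (((a : ℕ) < 2 * s - t ∧ (b : ℕ) < 2 * s - t) ∨ ((a : ℕ) < t ∨ (b : ℕ) < t)) ∧
      ¬((a : ℕ) = n - 1 ∧ δ ≤ (b : ℕ)) ∧ ¬((b : ℕ) = n - 1 ∧ δ ≤ (a : ℕ))) Iff.rfl

/-- for `r = r₁ + r₂`, `r₁ ≠ r₂`, `δ ≤ t ≤ s` and `n ≥ 2s+1`, the number
of copies of `K_{r₁,r₂}` in `G(n,s,t)` equals
`Σ_{j=1,2} C(t, r_j)·(C(n−r_j−1, r−r_j) − C(2s−t−r_j, r−r_j))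
  + Σ_{j=1,2} C(δ, r_j)·C(n−r_j−1, r−r_j−1) + C(2s−t, r)·C(r, r₁)`. -/
theorem GExt_bipartite_count (n s t δ r r₁ r₂ : ℕ) (hn : 0 < n) (hs : 0 < s) (ht : 0 < t)
    (hδ : 0 < δ) (hr₁ : 0 < r₁) (hr₂ : 0 < r₂) (hr : r = r₁ + r₂) (hne : r₁ ≠ r₂)
    (hδt : δ ≤ t) (hts : t ≤ s) (hn2s : 2 * s + 1 ≤ n) :
    (bipCopies (GExt n s t δ) r₁ r₂).ncard =
      (Nat.choose t r₁ *
          (Nat.choose (n - r₁ - 1) (r - r₁) - Nat.choose (2 * s - t - r₁) (r - r₁)) +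
        Nat.choose t r₂ *
          (Nat.choose (n - r₂ - 1) (r - r₂) - Nat.choose (2 * s - t - r₂) (r - r₂))) +
      (Nat.choose δ r₁ * Nat.choose (n - r₁ - 1) (r - r₁ - 1) +
        Nat.choose δ r₂ * Nat.choose (n - r₂ - 1) (r - r₂ - 1)) +
      Nat.choose (2 * s - t) r * Nat.choose r r₁ := by
  subst hr
  obtain ⟨k₁, rfl⟩ : ∃ k, r₁ = k + 1 := ⟨r₁ - 1, by omega⟩
  obtain ⟨k₂, rfl⟩ : ∃ k, r₂ = k + 1 := ⟨r₂ - 1, by omega⟩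
  classical
  have hun : n - 1 < n := by omega
  set u : Fin n := ⟨n - 1, hun⟩ with hudef
  have huval : (u : ℕ) = n - 1 := rfl
  have hvne : ∀ a b : Fin n, a ≠ b ↔ (a : ℕ) ≠ (b : ℕ) := by
    intro a b
    constructor
    · intro h h'; exact h (Fin.ext h')
    · intro h h'; exact h (congrArg Fin.val h')
  -- adjacency facts
  have adj_iff : ∀ a b : Fin n, (GExt n s t δ).Adj a b ↔ (a ≠ b ∧
      (((a : ℕ) < 2 * s - t ∧ (b : ℕ) < 2 * s - t) ∨ ((a : ℕ) < t ∨ (b : ℕ) < t)) ∧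
      ¬((a : ℕ) = n - 1 ∧ δ ≤ (b : ℕ)) ∧ ¬((b : ℕ) = n - 1 ∧ δ ≤ (a : ℕ))) :=
    fun a b => Iff.rfl
  have hadjD : ∀ w b : Fin n, w ≠ b → (b : ℕ) < δ → (GExt n s t δ).Adj w b := by
    intro w b hwb hb
    exact (adj_iff w b).mpr ⟨hwb, by omega, by omega, by omega⟩
  have hadjA : ∀ w b : Fin n, w ≠ b → (b : ℕ) < t → (w : ℕ) ≠ n - 1 →
      (GExt n s t δ).Adj w b := by
    intro w b hwb hb hw
    exact (adj_iff w b).mpr ⟨hwb, by omega, by omega, by omega⟩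
  have hadjK : ∀ w b : Fin n, w ≠ b → (w : ℕ) < 2 * s - t → (b : ℕ) < 2 * s - t →
      (GExt n s t δ).Adj w b := by
    intro w b hwb hw hb
    exact (adj_iff w b).mpr ⟨hwb, by omega, by omega, by omega⟩
  have hforceδ : ∀ b : Fin n, (GExt n s t δ).Adj u b → (b : ℕ) < δ := by
    intro b hb
    obtain ⟨-, -, h3, -⟩ := (adj_iff u b).mp hb
    omega
  have hforceA : ∀ v b : Fin n, (GExt n s t δ).Adj v b → 2 * s - t ≤ (v : ℕ) →
      (v : ℕ) ≠ n - 1 → (b : ℕ) < t := by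
    intro v b hvb hv hvn
    obtain ⟨-, h2, -, h4⟩ := (adj_iff v b).mp hvb
    omega
  -- the three vertex classes
  set A : Finset (Fin n) := Finset.univ.filter (fun v : Fin n => (v : ℕ) < t) with hAdef
  set K : Finset (Fin n) := Finset.univ.filter (fun v : Fin n => (v : ℕ) < 2 * s - t)
    with hKdef
  set D : Finset (Fin n) := Finset.univ.filter (fun v : Fin n => (v : ℕ) < δ) with hDdef
  have hmemA : ∀ v : Fin n, v ∈ A ↔ (v : ℕ) < t := by
    intro v; simp [hAdef]
  have hmemK : ∀ v : Fin n, v ∈ K ↔ (v : ℕ) < 2 * s - t := by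
    intro v; simp [hKdef]
  have hmemD : ∀ v : Fin n, v ∈ D ↔ (v : ℕ) < δ := by
    intro v; simp [hDdef]
  have hAcard : A.card = t := card_fin_lt n t (by omega)
  have hKcard : K.card = 2 * s - t := card_fin_lt n (2 * s - t) (by omega)
  have hDcard : D.card = δ := card_fin_lt n δ (by omega)
  have huA : u ∉ A := by rw [hmemA]; omega
  have huK : u ∉ K := by rw [hmemK]; omega
  have huD : u ∉ D := by rw [hmemD]; omega
  have hAK : A ⊆ K := by
    intro v hv; rw [hmemA] at hv; rw [hmemK]; omega
  have hDA : D ⊆ A := by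
    intro v hv; rw [hmemD] at hv; rw [hmemA]; omega
  -- from ncard to a Finset count
  have h0 : bipCopies (GExt n s t δ) (k₁ + 1) (k₂ + 1) =
      ↑(Finset.univ.filter fun p : Finset (Fin n) × Finset (Fin n) =>
        p.1.card = k₁ + 1 ∧ p.2.card = k₂ + 1 ∧ Disjoint p.1 p.2 ∧
          ∀ a ∈ p.1, ∀ b ∈ p.2, (GExt n s t δ).Adj a b) := by
    ext p
    simp [bipCopies]
  rw [h0, Set.ncard_coe_finset]
  set Ω : Finset (Finset (Fin n) × Finset (Fin n)) :=
    Finset.univ.filter fun p : Finset (Fin n) × Finset (Fin n) =>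
      p.1.card = k₁ + 1 ∧ p.2.card = k₂ + 1 ∧ Disjoint p.1 p.2 ∧
        ∀ a ∈ p.1, ∀ b ∈ p.2, (GExt n s t δ).Adj a b with hΩdef
  -- membership in Ω
  have hmemΩ : ∀ p : Finset (Fin n) × Finset (Fin n), p ∈ Ω ↔
      (p.1.card = k₁ + 1 ∧ p.2.card = k₂ + 1 ∧ Disjoint p.1 p.2 ∧
        ∀ a ∈ p.1, ∀ b ∈ p.2, (GExt n s t δ).Adj a b) := by
    intro p; simp [hΩdef]
  -- decomposition into five disjoint cases
  have s1 := Finset.card_filter_add_card_filter_not (s := Ω)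
    (p := fun p : Finset (Fin n) × Finset (Fin n) => u ∈ p.1)
  have s2 := Finset.card_filter_add_card_filter_not
    (s := Ω.filter fun p => ¬ u ∈ p.1)
    (p := fun p : Finset (Fin n) × Finset (Fin n) => u ∈ p.2)
  have s3 := Finset.card_filter_add_card_filter_not
    (s := (Ω.filter fun p => ¬ u ∈ p.1).filter fun p => ¬ u ∈ p.2)
    (p := fun p : Finset (Fin n) × Finset (Fin n) => p.1 ⊆ K)
  have s4 := Finset.card_filter_add_card_filter_not
    (s := ((Ω.filter fun p => ¬ u ∈ p.1).filter fun p => ¬ u ∈ p.2).filter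
      fun p => p.1 ⊆ K)
    (p := fun p : Finset (Fin n) × Finset (Fin n) => p.2 ⊆ K)
  -- case 1a : u ∈ p.1
  have E1a : Ω.filter (fun p => u ∈ p.1) =
      Finset.univ.filter (fun p : Finset (Fin n) × Finset (Fin n) =>
        (p.2.card = k₂ + 1 ∧ p.2 ⊆ D) ∧
        (p.1.card = k₁ + 1 ∧ u ∈ p.1 ∧
          p.1 ⊆ insert u (Finset.univ \ insert u p.2))) := by
    ext ⟨S, T⟩
    simp only [Finset.mem_filter, Finset.mem_univ, true_and, hmemΩ]
    constructor
    · rintro ⟨⟨hS, hT, hdisj, hadj⟩, huS⟩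
      refine ⟨⟨hT, ?_⟩, hS, huS, ?_⟩
      · intro b hb
        rw [hmemD]
        exact hforceδ b (hadj u huS b hb)
      · intro a ha
        rcases eq_or_ne a u with rfl | hau
        · exact Finset.mem_insert_self _ _
        · refine Finset.mem_insert_of_mem ?_
          rw [Finset.mem_sdiff]
          refine ⟨Finset.mem_univ _, ?_⟩
          rw [Finset.mem_insert]
          rintro (h | h)
          · exact hau h
          · exact (Finset.disjoint_left.mp hdisj ha) h
    · rintro ⟨⟨hT, hTD⟩, hS, huS, hSsub⟩
      have huT : u ∉ T := fun h => huD (hTD h)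
      have hdisj : Disjoint S T := by
        rw [Finset.disjoint_left]
        intro a ha haT
        rcases Finset.mem_insert.mp (hSsub ha) with rfl | h
        · exact huT haT
        · rw [Finset.mem_sdiff, Finset.mem_insert] at h
          exact h.2 (Or.inr haT)
      refine ⟨⟨hS, hT, hdisj, ?_⟩, huS⟩
      intro a ha b hb
      refine hadjD a b ?_ ((hmemD b).mp (hTD hb))
      intro h
      exact (Finset.disjoint_left.mp hdisj ha) (h ▸ hb)
  have hc1a : (Ω.filter (fun p => u ∈ p.1)).card =
      δ.choose (k₂ + 1) * (n - (k₂ + 1) - 1).choose k₁ := by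
    rw [E1a, count1_snd D u huD k₁ (k₂ + 1), hDcard, Fintype.card_fin]
  -- case 1b : u ∉ p.1, u ∈ p.2
  have E1b : (Ω.filter fun p => ¬ u ∈ p.1).filter (fun p => u ∈ p.2) =
      Finset.univ.filter (fun p : Finset (Fin n) × Finset (Fin n) =>
        (p.1.card = k₁ + 1 ∧ p.1 ⊆ D) ∧
        (p.2.card = k₂ + 1 ∧ u ∈ p.2 ∧
          p.2 ⊆ insert u (Finset.univ \ insert u p.1))) := by
    ext ⟨S, T⟩
    simp only [Finset.mem_filter, Finset.mem_univ, true_and, hmemΩ]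
    constructor
    · rintro ⟨⟨⟨hS, hT, hdisj, hadj⟩, huS⟩, huT⟩
      refine ⟨⟨hS, ?_⟩, hT, huT, ?_⟩
      · intro a ha
        rw [hmemD]
        exact hforceδ a ((hadj a ha u huT).symm)
      · intro b hb
        rcases eq_or_ne b u with rfl | hbu
        · exact Finset.mem_insert_self _ _
        · refine Finset.mem_insert_of_mem ?_
          rw [Finset.mem_sdiff]
          refine ⟨Finset.mem_univ _, ?_⟩
          rw [Finset.mem_insert]
          rintro (h | h)
          · exact hbu h
          · exact (Finset.disjoint_right.mp hdisj hb) h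
    · rintro ⟨⟨hS, hSD⟩, hT, huT, hTsub⟩
      have huS : u ∉ S := fun h => huD (hSD h)
      have hdisj : Disjoint S T := by
        rw [Finset.disjoint_right]
        intro b hb hbS
        rcases Finset.mem_insert.mp (hTsub hb) with rfl | h
        · exact huS hbS
        · rw [Finset.mem_sdiff, Finset.mem_insert] at h
          exact h.2 (Or.inr hbS)
      refine ⟨⟨⟨hS, hT, hdisj, ?_⟩, huS⟩, huT⟩
      intro a ha b hb
      refine (hadjD b a ?_ ((hmemD a).mp (hSD ha))).symm
      intro h
      exact (Finset.disjoint_left.mp hdisj ha) (h ▸ hb)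
  have hc1b : ((Ω.filter fun p => ¬ u ∈ p.1).filter (fun p => u ∈ p.2)).card =
      δ.choose (k₁ + 1) * (n - (k₁ + 1) - 1).choose k₂ := by
    rw [E1b, count1_fst D u huD k₂ (k₁ + 1), hDcard, Fintype.card_fin]
  -- case 2a : u ∉ p.1 ∪ p.2, p.1 not inside the clique
  have E2a : ((Ω.filter fun p => ¬ u ∈ p.1).filter fun p => ¬ u ∈ p.2).filter
        (fun p => ¬ p.1 ⊆ K) =
      Finset.univ.filter (fun p : Finset (Fin n) × Finset (Fin n) =>
        (p.2.card = k₂ + 1 ∧ p.2 ⊆ A) ∧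
        (p.1.card = k₁ + 1 ∧ p.1 ⊆ Finset.univ \ insert u p.2 ∧
          ¬ p.1 ⊆ K \ p.2)) := by
    ext ⟨S, T⟩
    simp only [Finset.mem_filter, Finset.mem_univ, true_and, hmemΩ]
    constructor
    · rintro ⟨⟨⟨⟨hS, hT, hdisj, hadj⟩, huS⟩, huT⟩, hSK⟩
      obtain ⟨v, hvS, hvK⟩ := Finset.not_subset.mp hSK
      rw [hmemK, not_lt] at hvK
      have hvu : (v : ℕ) ≠ n - 1 := by
        rw [← huval]
        intro h
        exact huS (Fin.ext h ▸ hvS)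
      refine ⟨⟨hT, ?_⟩, hS, ?_, ?_⟩
      · intro b hb
        rw [hmemA]
        exact hforceA v b (hadj v hvS b hb) hvK hvu
      · intro a ha
        rw [Finset.mem_sdiff, Finset.mem_insert]
        refine ⟨Finset.mem_univ _, ?_⟩
        rintro (rfl | h)
        · exact huS ha
        · exact (Finset.disjoint_left.mp hdisj ha) h
      · intro h
        have := h hvS
        rw [Finset.mem_sdiff, hmemK] at this
        omega
    · rintro ⟨⟨hT, hTA⟩, hS, hSsub, hSnK⟩
      have huT : u ∉ T := fun h => huA (hTA h)
      have huS : u ∉ S := by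
        intro h
        have := hSsub h
        rw [Finset.mem_sdiff, Finset.mem_insert] at this
        exact this.2 (Or.inl rfl)
      have hdisj : Disjoint S T := by
        rw [Finset.disjoint_left]
        intro a ha haT
        have := hSsub ha
        rw [Finset.mem_sdiff, Finset.mem_insert] at this
        exact this.2 (Or.inr haT)
      have hSK : ¬ S ⊆ K := by
        intro h
        refine hSnK (fun a ha => ?_)
        rw [Finset.mem_sdiff]
        exact ⟨h ha, Finset.disjoint_left.mp hdisj ha⟩
      refine ⟨⟨⟨⟨hS, hT, hdisj, ?_⟩, huS⟩, huT⟩, hSK⟩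
      intro a ha b hb
      refine hadjA a b ?_ ((hmemA b).mp (hTA hb)) ?_
      · intro h
        exact (Finset.disjoint_left.mp hdisj ha) (h ▸ hb)
      · rw [← huval]
        intro h
        exact huS (Fin.ext h ▸ ha)
  have hc2a : (((Ω.filter fun p => ¬ u ∈ p.1).filter fun p => ¬ u ∈ p.2).filter
        (fun p => ¬ p.1 ⊆ K)).card =
      t.choose (k₂ + 1) *
        ((n - (k₂ + 1) - 1).choose (k₁ + 1) - (2 * s - t - (k₂ + 1)).choose (k₁ + 1)) := by
    rw [E2a, count2_snd A K u huK hAK (k₁ + 1) (k₂ + 1), hAcard, hKcard, Fintype.card_fin]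
  -- case 2b : u ∉ p.1 ∪ p.2, p.1 in the clique, p.2 not
  have E2b : ((((Ω.filter fun p => ¬ u ∈ p.1).filter fun p => ¬ u ∈ p.2).filter
        fun p => p.1 ⊆ K).filter (fun p => ¬ p.2 ⊆ K)) =
      Finset.univ.filter (fun p : Finset (Fin n) × Finset (Fin n) =>
        (p.1.card = k₁ + 1 ∧ p.1 ⊆ A) ∧
        (p.2.card = k₂ + 1 ∧ p.2 ⊆ Finset.univ \ insert u p.1 ∧
          ¬ p.2 ⊆ K \ p.1)) := by
    ext ⟨S, T⟩
    simp only [Finset.mem_filter, Finset.mem_univ, true_and, hmemΩ]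
    constructor
    · rintro ⟨⟨⟨⟨⟨hS, hT, hdisj, hadj⟩, huS⟩, huT⟩, hSK⟩, hTK⟩
      obtain ⟨v, hvT, hvK⟩ := Finset.not_subset.mp hTK
      rw [hmemK, not_lt] at hvK
      have hvu : (v : ℕ) ≠ n - 1 := by
        rw [← huval]
        intro h
        exact huT (Fin.ext h ▸ hvT)
      refine ⟨⟨hS, ?_⟩, hT, ?_, ?_⟩
      · intro a ha
        rw [hmemA]
        exact hforceA v a ((hadj a ha v hvT).symm) hvK hvu
      · intro b hb
        rw [Finset.mem_sdiff, Finset.mem_insert]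
        refine ⟨Finset.mem_univ _, ?_⟩
        rintro (rfl | h)
        · exact huT hb
        · exact (Finset.disjoint_right.mp hdisj hb) h
      · intro h
        have := h hvT
        rw [Finset.mem_sdiff, hmemK] at this
        omega
    · rintro ⟨⟨hS, hSA⟩, hT, hTsub, hTnK⟩
      have huS : u ∉ S := fun h => huA (hSA h)
      have huT : u ∉ T := by
        intro h
        have := hTsub h
        rw [Finset.mem_sdiff, Finset.mem_insert] at this
        exact this.2 (Or.inl rfl)
      have hdisj : Disjoint S T := by
        rw [Finset.disjoint_right]
        intro b hb hbS
        have := hTsub hb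
        rw [Finset.mem_sdiff, Finset.mem_insert] at this
        exact this.2 (Or.inr hbS)
      have hTK : ¬ T ⊆ K := by
        intro h
        refine hTnK (fun b hb => ?_)
        rw [Finset.mem_sdiff]
        exact ⟨h hb, Finset.disjoint_right.mp hdisj hb⟩
      refine ⟨⟨⟨⟨⟨hS, hT, hdisj, ?_⟩, huS⟩, huT⟩, hSA.trans hAK⟩, hTK⟩
      intro a ha b hb
      refine (hadjA b a ?_ ((hmemA a).mp (hSA ha)) ?_).symm
      · intro h
        exact (Finset.disjoint_left.mp hdisj ha) (h ▸ hb)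
      · rw [← huval]
        intro h
        exact huT (Fin.ext h ▸ hb)
  have hc2b : ((((Ω.filter fun p => ¬ u ∈ p.1).filter fun p => ¬ u ∈ p.2).filter
        fun p => p.1 ⊆ K).filter (fun p => ¬ p.2 ⊆ K)).card =
      t.choose (k₁ + 1) *
        ((n - (k₁ + 1) - 1).choose (k₂ + 1) - (2 * s - t - (k₁ + 1)).choose (k₂ + 1)) := by
    rw [E2b, count2_fst A K u huK hAK (k₁ + 1) (k₂ + 1), hAcard, hKcard, Fintype.card_fin]
  -- case 3 : everything inside the clique
  have E3 : ((((Ω.filter fun p => ¬ u ∈ p.1).filter fun p => ¬ u ∈ p.2).filter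
        fun p => p.1 ⊆ K).filter (fun p => p.2 ⊆ K)) =
      Finset.univ.filter (fun p : Finset (Fin n) × Finset (Fin n) =>
        (p.1.card = k₁ + 1 ∧ p.1 ⊆ K) ∧
        (p.2.card = k₂ + 1 ∧ p.2 ⊆ K \ p.1)) := by
    ext ⟨S, T⟩
    simp only [Finset.mem_filter, Finset.mem_univ, true_and, hmemΩ]
    constructor
    · rintro ⟨⟨⟨⟨⟨hS, hT, hdisj, hadj⟩, huS⟩, huT⟩, hSK⟩, hTK⟩
      refine ⟨⟨hS, hSK⟩, hT, ?_⟩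
      intro b hb
      rw [Finset.mem_sdiff]
      exact ⟨hTK hb, Finset.disjoint_right.mp hdisj hb⟩
    · rintro ⟨⟨hS, hSK⟩, hT, hTsub⟩
      have hTK : T ⊆ K := fun b hb => (Finset.mem_sdiff.mp (hTsub hb)).1
      have hdisj : Disjoint S T := by
        rw [Finset.disjoint_right]
        intro b hb
        exact (Finset.mem_sdiff.mp (hTsub hb)).2
      have huS : u ∉ S := fun h => huK (hSK h)
      have huT : u ∉ T := fun h => huK (hTK h)
      refine ⟨⟨⟨⟨⟨hS, hT, hdisj, ?_⟩, huS⟩, huT⟩, hSK⟩, hTK⟩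
      intro a ha b hb
      refine hadjK a b ?_ ((hmemK a).mp (hSK ha)) ((hmemK b).mp (hTK hb))
      intro h
      exact (Finset.disjoint_left.mp hdisj ha) (h ▸ hb)
  have hc3 : ((((Ω.filter fun p => ¬ u ∈ p.1).filter fun p => ¬ u ∈ p.2).filter
        fun p => p.1 ⊆ K).filter (fun p => p.2 ⊆ K)).card =
      (2 * s - t).choose ((k₁ + 1) + (k₂ + 1)) * ((k₁ + 1) + (k₂ + 1)).choose (k₁ + 1) := by
    rw [E3, count3 K (k₁ + 1) (k₂ + 1), hKcard, choose_mul_choose]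
  -- put everything together
  have e₃ : k₁ + 1 + (k₂ + 1) - (k₁ + 1) - 1 = k₂ := by omega
  have e₄ : k₁ + 1 + (k₂ + 1) - (k₂ + 1) - 1 = k₁ := by omega
  have e₁ : k₁ + 1 + (k₂ + 1) - (k₁ + 1) = k₂ + 1 := by omega
  have e₂ : k₁ + 1 + (k₂ + 1) - (k₂ + 1) = k₁ + 1 := by omega
  rw [← s1, ← s2, ← s3, ← s4, hc1a, hc1b, hc2a, hc2b, hc3, e₃, e₄, e₁, e₂]
  ring
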